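/- Let A ⊆ B be an inclusion of C*-algebras and let a ∈ A be a positive element. If the inclusion A ⊆ B has real rank zero, then the induced inclusion cl(aAa) ⊆ cl(aBa) of hereditary C*-subalgebras (where cl(aAa) is the norm closure of {a·x·a : x ∈ A} and cl(aBa) is the norm closure of {a·b·a : b ∈ B}) has real rank zero. -/

import Mathlib

open Filter Topology
open scoped ContinuousMapZero

section Defs

variable {B : Type*} [NonUnitalNormedRing B] [StarRing B] [PartialOrder B]

/-- A projection in a C*-algebra: a self-adjoint idempotent. -/
def IsProjection (p : B) : Prop := star p = p ∧ p * p = p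

/-- The hereditary subalgebra `cl(a·S·a)`: the norm closure of `{a * b * a : b ∈ S}`. -/
def herSub (S : Set B) (a : B) : Set B := closure {x : B | ∃ b ∈ S, x = a * b * a}

/-- `T` has an approximate unit of projections. -/
def HasApproxUnitOfProjections (T : Set B) : Prop :=
  ∀ x ∈ T, 0 ≤ x → ∀ ε : ℝ, 0 < ε → ∃ p ∈ T, IsProjection p ∧ ‖p * x - x‖ < ε

/-- The inclusion `A ⊆ S` of C*-algebras has real rank zero. -/
def InclusionRealRankZero (A S : Set B) : Prop :=
  ∀ a ∈ A, 0 ≤ a → a ≠ 0 → HasApproxUnitOfProjections (herSub S a)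

end Defs

section Aux

variable {B : Type*} [NonUnitalCStarAlgebra B]

/-- cfcₙHom (over ℝ) of an element of a closed non-unital star subalgebra stays inside. -/
lemma cfcnHom_mem_closed (S : NonUnitalStarSubalgebra ℂ B) (hS : IsClosed (S : Set B))
    {c : B} (hc : c ∈ S) (ha : IsSelfAdjoint c)
    (g : C(quasispectrum ℝ c, ℝ)₀) : cfcₙHom ha g ∈ S := by
  induction g using ContinuousMapZero.induction_on_of_compact with
  | zero => rw [map_zero]; exact S.zero_mem
  | id =>
      have hid : cfcₙHom ha (ContinuousMapZero.id (quasispectrum ℝ c)) = c :=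
        cfcₙHom_id ha
      rw [hid]; exact hc
  | star_id =>
      have hid : cfcₙHom ha (ContinuousMapZero.id (quasispectrum ℝ c)) = c :=
        cfcₙHom_id ha
      rw [map_star, hid]; exact star_mem hc
  | add f g hf hg => rw [map_add]; exact add_mem hf hg
  | mul f g hf hg => rw [map_mul]; exact mul_mem hf hg
  | smul r f hf =>
      rw [map_smul, ← Complex.coe_smul]
      exact SMulMemClass.smul_mem _ hf
  | frequently f hf =>
      have hcl : IsClosed {g : C(quasispectrum ℝ c, ℝ)₀ | cfcₙHom ha g ∈ S} :=
        hS.preimage (cfcₙHom_isClosedEmbedding ha).continuous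
      exact hcl.closure_subset (mem_closure_iff_frequently.mpr hf)

/-- cfcₙ (over ℝ) of an element of a closed non-unital star subalgebra stays inside. -/
lemma cfcn_mem_closed (S : NonUnitalStarSubalgebra ℂ B) (hS : IsClosed (S : Set B))
    {c : B} (hc : c ∈ S) (f : ℝ → ℝ) : cfcₙ f c ∈ S := by
  refine cfcₙ_cases (· ∈ S) c f S.zero_mem fun hf hf0 ha => ?_
  exact cfcnHom_mem_closed S hS hc ha _

end Aux

theorem stmt16 {B : Type*} [NonUnitalCStarAlgebra B] [PartialOrder B] [StarOrderedRing B]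
    (A : NonUnitalStarSubalgebra ℂ B) (hAc : IsClosed (A : Set B))
    (a : B) (haA : a ∈ A) (ha : 0 ≤ a)
    (h : InclusionRealRankZero (A : Set B) (Set.univ : Set B)) :
    InclusionRealRankZero (herSub (A : Set B) a) (herSub (Set.univ : Set B) a) := by
  have ha' : star a = a := (IsSelfAdjoint.of_nonneg ha)
  -- the hereditary subalgebra cl(aBa) as a non-unital star subalgebra
  let HA : NonUnitalStarSubalgebra ℂ B :=
    { carrier := {x : B | ∃ t : B, x = a * t * a}
      add_mem' := by rintro x y ⟨s, rfl⟩ ⟨t, rfl⟩; exact ⟨s + t, by rw [mul_add, add_mul]⟩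
      zero_mem' := ⟨0, by simp⟩
      mul_mem' := by
        rintro x y ⟨s, rfl⟩ ⟨t, rfl⟩
        exact ⟨s * (a * a) * t, by simp only [mul_assoc]⟩
      smul_mem' := by
        rintro r x ⟨t, rfl⟩
        exact ⟨r • t, by simp [mul_smul_comm, smul_mul_assoc]⟩
      star_mem' := by
        rintro x ⟨t, rfl⟩
        exact ⟨star t, by simp only [star_mul, ha', mul_assoc]⟩ }
  let H : NonUnitalStarSubalgebra ℂ B := HA.topologicalClosure
  have hHclosed : IsClosed (H : Set B) := HA.isClosed_topologicalClosure
  have hHset : herSub (Set.univ : Set B) a = (H : Set B) := by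
    have : {x : B | ∃ b ∈ (Set.univ : Set B), x = a * b * a} = (HA : Set B) := by
      ext x; simp [HA]; rfl
    simp only [herSub, this]; rfl
  -- H B H ⊆ H
  have hHBH : ∀ (u v b : B), u ∈ H → v ∈ H → u * b * v ∈ H := by
    intro u v b hu hv
    have hu' : u ∈ closure (HA : Set B) := hu
    have hv' : v ∈ closure (HA : Set B) := hv
    have : u * b * v ∈ closure (HA : Set B) := by
      refine map_mem_closure₂ (f := fun u v : B => u * b * v) (by fun_prop) hu' hv' ?_
      rintro x ⟨s, rfl⟩ y ⟨t, rfl⟩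
      exact ⟨s * (a * b * a) * t, by simp only [mul_assoc]⟩
    exact this
  -- now the main argument
  intro c hcmem hc0 hcne
  have hcH : c ∈ H := by
    show c ∈ (H : Set B)
    rw [← hHset]
    exact closure_mono (by rintro x ⟨b, hb, rfl⟩; exact ⟨b, trivial, rfl⟩) hcmem
  have hcA : c ∈ (A : Set B) := by
    refine closure_minimal ?_ hAc hcmem
    rintro x ⟨b, hb, rfl⟩
    exact A.mul_mem (A.mul_mem haA hb) haA
  have hcsa : IsSelfAdjoint c := IsSelfAdjoint.of_nonneg hc0
  -- approximating elements
  set fn : ℕ → ℝ → ℝ := fun n x => min ((n + 1 : ℝ) * |x|) 1 with hfn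
  have hfncont : ∀ n, ContinuousOn (fn n) (quasispectrum ℝ c) :=
    fun n => ((continuous_const.mul continuous_abs).min continuous_const).continuousOn
  have hfn0 : ∀ n, fn n 0 = 0 := fun n => by simp [hfn]
  set P : ℕ → B := fun n => cfcₙ (fn n) c with hP
  have hPH : ∀ n, P n ∈ H := fun n => cfcn_mem_closed H hHclosed hcH (fn n)
  have hPsa : ∀ n, IsSelfAdjoint (P n) := fun n => cfcₙ_predicate (fn n) c
  -- ‖c * P n - c‖ ≤ 1/(n+1)
  have hbound : ∀ (n : ℕ) (x : ℝ), |x * fn n x - x| ≤ 1 / (n + 1 : ℝ) := by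
    intro n x
    have hn : (0 : ℝ) < n + 1 := by positivity
    rcases le_or_gt (1 / (n + 1 : ℝ)) |x| with hx | hx
    · have : fn n x = 1 := min_eq_right (by rw [div_le_iff₀ hn] at hx; nlinarith)
      simp [this, hn.le]
    · have h0 : 0 ≤ fn n x := le_min (by positivity) zero_le_one
      have h1 : fn n x ≤ 1 := min_le_right _ _
      calc |x * fn n x - x| = |x| * |fn n x - 1| := by
            rw [← abs_mul]; ring_nf
        _ ≤ |x| * 1 := by
            gcongr
            rw [abs_le]; constructor <;> linarith
        _ ≤ 1 / (n + 1 : ℝ) := by rw [mul_one]; exact hx.le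
  have hmul : ∀ n, c * P n = cfcₙ (fun x : ℝ => x * fn n x) c := by
    intro n
    rw [hP]
    rw [cfcₙ_mul (fun x : ℝ => x) (fn n) c (by fun_prop) rfl (hfncont n) (hfn0 n)]
    rw [cfcₙ_id' ℝ c]
  have hnorm : ∀ n : ℕ, ‖c * P n - c‖ ≤ 1 / (n + 1 : ℝ) := by
    intro n
    have : c * P n - c = cfcₙ (fun x : ℝ => x * fn n x - x) c := by
      rw [hmul n, cfcₙ_sub (fun x : ℝ => x * fn n x) (fun x : ℝ => x) c
        (by exact (continuousOn_id.mul (hfncont n))) (by simp [hfn0 n]) (by fun_prop) rfl,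
        cfcₙ_id' ℝ c]
    rw [this]
    exact norm_cfcₙ_le fun x _ => hbound n x
  have htendsto : Tendsto (fun n : ℕ => c * P n) atTop (𝓝 c) := by
    rw [tendsto_iff_norm_sub_tendsto_zero]
    refine squeeze_zero (fun n => norm_nonneg _) hnorm ?_
    exact tendsto_one_div_add_atTop_nhds_zero_nat
  have htendsto' : Tendsto (fun n : ℕ => P n * c) atTop (𝓝 c) := by
    rw [tendsto_iff_norm_sub_tendsto_zero]
    refine squeeze_zero (fun n => norm_nonneg _) (fun n => ?_) tendsto_one_div_add_atTop_nhds_zero_nat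
    calc ‖P n * c - c‖ = ‖star (c * P n - c)‖ := by
          simp [star_sub, star_mul, hcsa.star_eq, (hPsa n).star_eq]
      _ = ‖c * P n - c‖ := norm_star _
      _ ≤ 1 / (n + 1 : ℝ) := hnorm n
  -- key: cBc ⊆ cl(c H c)
  have hkey : ∀ b : B, c * b * c ∈ herSub (herSub (Set.univ : Set B) a) c := by
    intro b
    have hseq : Tendsto (fun n : ℕ => (c * P n) * b * (P n * c)) atTop (𝓝 (c * b * c)) :=
      (htendsto.mul_const b).mul htendsto'
    refine mem_closure_of_tendsto hseq ?_
    filter_upwards with n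
    refine ⟨P n * b * P n, ?_, by simp only [mul_assoc]⟩
    rw [hHset]
    exact hHBH _ _ _ (hPH n) (hPH n)
  -- conclude
  intro x hx hx0 ε hε
  have hxsub : x ∈ herSub (Set.univ : Set B) c :=
    closure_mono (by rintro y ⟨t, ht, rfl⟩; exact ⟨t, trivial, rfl⟩) hx
  obtain ⟨p, hp, hpproj, hpx⟩ := h c hcA hc0 hcne x hxsub hx0 ε hε
  refine ⟨p, ?_, hpproj, hpx⟩
  have : {y : B | ∃ t ∈ (Set.univ : Set B), y = c * t * c} ⊆
      herSub (herSub (Set.univ : Set B) a) c := by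
    rintro y ⟨t, -, rfl⟩; exact hkey t
  exact closure_minimal this isClosed_closure hp
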